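/- arXiv:2411.08468 — 6 statements merged into one kernel-verified Lean document; each statement's English description precedes it below -/
import Mathlib

section
/- Let p ≥ 1, let Σ̂ be a p×p real symmetric positive definite matrix, and let μ > 0, τ > 0. Consider the feasible set F = {(L,S) : L a p×p real symmetric positive semidefinite matrix, S a p×p real symmetric positive definite matrix}. Suppose (L̂, Ŝ) ∈ F is a global minimizer over F of the ℓ1-regularized objective f(L,S) + τ‖S‖₁, where ‖S‖₁ = Σ_{i,j} |S_{ij}|. Then for every λ > 0, (L̂, Ŝ) is not a local minimizer over F of the ℓ0-regularized objective H(L,S) = f(L,S) + λ‖S‖₀. -/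
set_option maxHeartbeats 1000000

open Matrix

/-- The smooth part of the factor-analysis objective:
`f(L,S) = tr L + μ (tr((L+S) Σ̂⁻¹) − log det (L+S))`. -/
noncomputable def faObj {p : ℕ} (μ : ℝ) (SigHat L S : Matrix (Fin p) (Fin p) ℝ) : ℝ :=
  L.trace + μ * (((L + S) * SigHat⁻¹).trace - Real.log ((L + S).det))

/-- The ℓ0 "norm": number of nonzero entries. -/
noncomputable def l0Norm {p : ℕ} (S : Matrix (Fin p) (Fin p) ℝ) : ℕ :=
  {ij : Fin p × Fin p | S ij.1 ij.2 ≠ 0}.ncard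

/-- The elementwise ℓ1 norm. -/
noncomputable def l1Norm {p : ℕ} (S : Matrix (Fin p) (Fin p) ℝ) : ℝ :=
  ∑ i, ∑ j, |S i j|

/-- Squared Frobenius norm. -/
noncomputable def frobSq {p : ℕ} (A : Matrix (Fin p) (Fin p) ℝ) : ℝ :=
  ∑ i, ∑ j, (A i j) ^ 2

lemma aux_posSemidef_smul {p : ℕ} {M : Matrix (Fin p) (Fin p) ℝ} (hM : M.PosSemidef)
    {s : ℝ} (hs : 0 ≤ s) : (s • M).PosSemidef := by
  constructor
  · unfold Matrix.IsHermitian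
    rw [conjTranspose_smul, hM.1.eq]
    simp
  · exact (hM.smul hs).2

lemma aux_posDef_smul {p : ℕ} {M : Matrix (Fin p) (Fin p) ℝ} (hM : M.PosDef)
    {s : ℝ} (hs : 0 < s) : (s • M).PosDef := by
  constructor
  · unfold Matrix.IsHermitian
    rw [conjTranspose_smul, hM.1.eq]
    simp
  · exact (hM.smul hs).2

lemma aux_faObj_smul {p : ℕ} (μ : ℝ) (SigHat L S : Matrix (Fin p) (Fin p) ℝ)
    {s : ℝ} (hs : 0 < s) (hdet : 0 < (L + S).det) :
    faObj μ SigHat (s • L) (s • S) =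
    s * L.trace + μ * (s * ((L + S) * SigHat⁻¹).trace -
      ((p : ℝ) * Real.log s + Real.log ((L + S).det))) := by
  unfold faObj
  rw [← smul_add, Matrix.smul_mul, trace_smul, trace_smul, det_smul,
    Real.log_mul (by positivity) (ne_of_gt hdet), Real.log_pow]
  simp [smul_eq_mul]

lemma aux_l1_smul {p : ℕ} (S : Matrix (Fin p) (Fin p) ℝ) {s : ℝ} (hs : 0 ≤ s) :
    l1Norm (s • S) = s * l1Norm S := by
  simp [l1Norm, Matrix.smul_apply, abs_mul, abs_of_nonneg hs, Finset.mul_sum]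

lemma aux_l0_smul {p : ℕ} (S : Matrix (Fin p) (Fin p) ℝ) {s : ℝ} (hs : s ≠ 0) :
    l0Norm (s • S) = l0Norm S := by
  unfold l0Norm
  congr 1
  ext ij
  simp [Matrix.smul_apply, hs]

lemma aux_frobSq_smul {p : ℕ} (L : Matrix (Fin p) (Fin p) ℝ) (s : ℝ) :
    frobSq ((1 + s) • L - L) = s ^ 2 * frobSq L := by
  have h : (1 + s) • L - L = s • L := by
    ext i j
    simp [Matrix.smul_apply]
    ring
  rw [h]
  simp [frobSq, Matrix.smul_apply, mul_pow, Finset.mul_sum]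

/-- Any global minimizer of the ℓ1-regularized objective over the feasible set
`F = {(L,S) : L PSD, S PD}` fails to be a local minimizer (in the Frobenius norm)
of the ℓ0-regularized objective, for every λ > 0. -/
theorem l1_global_min_not_l0_local_min {p : ℕ} (hp : 1 ≤ p)
    (SigHat : Matrix (Fin p) (Fin p) ℝ) (hSig : SigHat.PosDef)
    (μ τ : ℝ) (hμ : 0 < μ) (hτ : 0 < τ)
    (Lhat Shat : Matrix (Fin p) (Fin p) ℝ)
    (hLhat : Lhat.PosSemidef) (hShat : Shat.PosDef)
    (hglobal : ∀ L S : Matrix (Fin p) (Fin p) ℝ, L.PosSemidef → S.PosDef →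
      faObj μ SigHat Lhat Shat + τ * l1Norm Shat ≤ faObj μ SigHat L S + τ * l1Norm S) :
    ∀ lam : ℝ, 0 < lam →
      ¬ ∃ ε : ℝ, 0 < ε ∧
        ∀ L S : Matrix (Fin p) (Fin p) ℝ, L.PosSemidef → S.PosDef →
          Real.sqrt (frobSq (L - Lhat) + frobSq (S - Shat)) < ε →
          faObj μ SigHat Lhat Shat + lam * (l0Norm Shat : ℝ) ≤
            faObj μ SigHat L S + lam * (l0Norm S : ℝ) := by
  intro lam hlam
  rintro ⟨ε, hε, hloc⟩
  -- basic data
  set A : ℝ := Lhat.trace with hA_def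
  set T : ℝ := ((Lhat + Shat) * SigHat⁻¹).trace with hT_def
  set D : ℝ := Real.log ((Lhat + Shat).det) with hD_def
  set N : ℝ := l1Norm Shat with hN_def
  have hLS : (Lhat + Shat).PosDef := Matrix.PosDef.posSemidef_add hLhat hShat
  have hdet : 0 < (Lhat + Shat).det := hLS.det_pos
  have i0 : Fin p := ⟨0, hp⟩
  -- N > 0
  have hdiag : 0 < Shat i0 i0 := by
    exact hShat.diag_pos
  have hN : 0 < N := by
    have h1 : |Shat i0 i0| ≤ ∑ j, |Shat i0 j| :=
      Finset.single_le_sum (f := fun j => |Shat i0 j|) (fun j _ => abs_nonneg _) (Finset.mem_univ i0)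
    have h2 : (∑ j, |Shat i0 j|) ≤ ∑ i, ∑ j, |Shat i j| :=
      Finset.single_le_sum (f := fun i => ∑ j, |Shat i j|) (fun i _ => Finset.sum_nonneg fun j _ => abs_nonneg _)
        (Finset.mem_univ i0)
    have : 0 < |Shat i0 i0| := abs_pos.mpr (ne_of_gt hdiag)
    simp only [hN_def, l1Norm]
    linarith
  have hpe : 0 < (p : ℝ) := by exact_mod_cast hp
  -- faObj value at the base point
  have hbase : faObj μ SigHat Lhat Shat = A + μ * (T - D) := by
    rw [hA_def, hT_def, hD_def]; rfl
  -- key scalar inequality from global ℓ1 optimality along the scaling ray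
  set B : ℝ := A + μ * T + τ * N with hB_def
  have hkey : ∀ s : ℝ, 0 < s → B ≤ s * B - μ * p * Real.log s := by
    intro s hs
    have hfeas1 : (s • Lhat).PosSemidef := aux_posSemidef_smul hLhat hs.le
    have hfeas2 : (s • Shat).PosDef := aux_posDef_smul hShat hs
    have := hglobal (s • Lhat) (s • Shat) hfeas1 hfeas2
    rw [aux_faObj_smul μ SigHat Lhat Shat hs hdet, aux_l1_smul Shat hs.le, hbase] at this
    rw [← hA_def, ← hT_def, ← hD_def, ← hN_def] at this
    nlinarith [this]
  -- B ≤ μ p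
  have hBle : B ≤ μ * p := by
    by_contra hB
    push_neg at hB
    have hBpos : 0 < B := lt_trans (by positivity) hB
    have hs0 : 0 < μ * p / B := by positivity
    have h1 := hkey (μ * p / B) hs0
    have hlog1 : Real.log (μ * p / B) = - Real.log (B / (μ * p)) := by
      rw [← Real.log_inv]
      congr 1
      field_simp
    have hx : (1:ℝ) < B / (μ * p) := (one_lt_div (by positivity)).mpr hB
    have hlt : Real.log (B / (μ * p)) < B / (μ * p) - 1 :=
      Real.log_lt_sub_one_of_pos (by positivity) (ne_of_gt hx)
    have hmul : (μ * p / B) * B = μ * p := by field_simp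
    rw [hlog1, hmul] at h1
    have h2 : Real.log (B / (μ * p)) * (μ * p) < (B / (μ * p) - 1) * (μ * p) :=
      (mul_lt_mul_iff_left₀ (by positivity)).mpr hlt
    have h3 : (B / (μ * p) - 1) * (μ * p) = B - μ * p := by field_simp
    nlinarith [h1, h2]
  -- c := A + μ T < μ p
  set c : ℝ := A + μ * T with hc_def
  have hclt : c < μ * p := by
    have : 0 < τ * N := by positivity
    simp only [hB_def] at hBle
    linarith
  -- choose perturbation size
  set F : ℝ := frobSq Lhat + frobSq Shat with hF_def
  have hFnn : 0 ≤ F := by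
    apply add_nonneg <;>
      exact Finset.sum_nonneg fun i _ => Finset.sum_nonneg fun j _ => sq_nonneg _
  set δ : ℝ := min ((μ * p - c) / (2 * (|c| + μ * p))) (ε / (2 * (Real.sqrt F + 1)))
    with hδ_def
  have hδpos : 0 < δ := by
    apply lt_min
    · apply div_pos (by linarith)
      have : 0 ≤ |c| := abs_nonneg c
      nlinarith
    · apply div_pos hε
      nlinarith [Real.sqrt_nonneg F]
  set s : ℝ := 1 + δ with hs_def
  have hs1 : 1 < s := by simp [hs_def]; linarith
  have hspos : 0 < s := by linarith
  -- c * s < μ * p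
  have hcs : c * s < μ * p := by
    have h1 : c * s = c + c * δ := by ring
    have h2 : c * δ ≤ |c| * δ := by
      apply mul_le_mul_of_nonneg_right (le_abs_self c) hδpos.le
    have h3 : δ ≤ (μ * p - c) / (2 * (|c| + μ * p)) := min_le_left _ _
    have habs : 0 ≤ |c| := abs_nonneg c
    have hden : 0 < 2 * (|c| + μ * p) := by nlinarith
    have h4 : |c| * δ ≤ |c| * ((μ * p - c) / (2 * (|c| + μ * p))) :=
      mul_le_mul_of_nonneg_left h3 habs
    have hq : |c| / (2 * (|c| + μ * p)) < 1 := by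
      rw [div_lt_one hden]; nlinarith
    have h5 : |c| * ((μ * p - c) / (2 * (|c| + μ * p))) < μ * p - c := by
      calc |c| * ((μ * p - c) / (2 * (|c| + μ * p)))
          = (|c| / (2 * (|c| + μ * p))) * (μ * p - c) := by ring
        _ < 1 * (μ * p - c) := mul_lt_mul_of_pos_right hq (by linarith)
        _ = μ * p - c := one_mul _
    linarith
  -- strict decrease of the ℓ0 objective along the ray
  have hlogpos : 0 < Real.log s := Real.log_pos hs1
  have hslog : s - 1 < s * Real.log s := by
    have h1 : Real.log s⁻¹ < s⁻¹ - 1 :=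
      Real.log_lt_sub_one_of_pos (by positivity) (by
        intro h
        rw [inv_eq_one] at h
        linarith)
    rw [Real.log_inv] at h1
    have h2 : s * (-Real.log s) < s * (s⁻¹ - 1) := (mul_lt_mul_iff_right₀ hspos).mpr h1
    have h3 : s * (s⁻¹ - 1) = 1 - s := by field_simp
    nlinarith
  have hdec : (s - 1) * c - μ * p * Real.log s < 0 := by
    rcases le_or_gt 0 c with hc0 | hc0
    · have h1 : c * s * Real.log s < μ * p * Real.log s :=
        (mul_lt_mul_iff_left₀ hlogpos).mpr hcs
      have h2 : c * (s - 1) ≤ c * (s * Real.log s) :=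
        mul_le_mul_of_nonneg_left hslog.le hc0
      nlinarith
    · have h1 : (s - 1) * c < 0 := mul_neg_of_pos_of_neg (by linarith) hc0
      nlinarith [mul_pos (mul_pos hμ hpe) hlogpos]
  -- closeness in Frobenius norm
  have hclose : Real.sqrt (frobSq (s • Lhat - Lhat) + frobSq (s • Shat - Shat)) < ε := by
    rw [hs_def, aux_frobSq_smul Lhat δ, aux_frobSq_smul Shat δ]
    have : δ ^ 2 * frobSq Lhat + δ ^ 2 * frobSq Shat = δ ^ 2 * F := by
      rw [hF_def]; ring
    rw [this, Real.sqrt_mul (sq_nonneg δ), Real.sqrt_sq hδpos.le]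
    have h1 : δ ≤ ε / (2 * (Real.sqrt F + 1)) := min_le_right _ _
    have h2 : Real.sqrt F < Real.sqrt F + 1 := by linarith
    have hsF : 0 ≤ Real.sqrt F := Real.sqrt_nonneg F
    calc δ * Real.sqrt F ≤ ε / (2 * (Real.sqrt F + 1)) * Real.sqrt F := by
          exact mul_le_mul_of_nonneg_right h1 hsF
      _ < ε := by
          rw [div_mul_eq_mul_div, div_lt_iff₀ (by nlinarith)]
          nlinarith
  -- apply the local minimality hypothesis and derive a contradiction
  have hfeas1 : (s • Lhat).PosSemidef := aux_posSemidef_smul hLhat hspos.le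
  have hfeas2 : (s • Shat).PosDef := aux_posDef_smul hShat hspos
  have hle := hloc (s • Lhat) (s • Shat) hfeas1 hfeas2 hclose
  rw [aux_faObj_smul μ SigHat Lhat Shat hspos hdet,
    aux_l0_smul Shat (ne_of_gt hspos), hbase] at hle
  rw [← hA_def, ← hT_def, ← hD_def] at hle
  nlinarith [hle]
end

section
/- Let A be a symmetric invertible p×p real matrix with inverse Y = A⁻¹, let i ≠ j be indices, set Δ = Y_{ii}·Y_{jj} − Y_{ij}², and let δ ∈ ℝ satisfy q(δ) := −Δ·δ² + 2·Y_{ij}·δ + 1 ≠ 0. Then B := A + δ·(e_i e_jᵀ + e_j e_iᵀ) is invertible and the (i,j) entry of B⁻¹ equals (−Δ·δ + Y_{ij})/q(δ). -/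
open Matrix


lemma sandwich {p : ℕ} (Y : Matrix (Fin p) (Fin p) ℝ) (i j k l : Fin p) (c d : ℝ) :
    single i j c * Y * single k l d = single i l (c * Y j k * d) := by
  ext a b
  by_cases ha : a = i <;> by_cases hb : b = l
  · subst ha hb; simp [mul_assoc]
  · subst ha; simp [Ne.symm hb, hb]
  · subst hb; simp [Ne.symm ha, ha]
  · rw [Matrix.mul_single_apply_of_ne (hbj := hb)]; simp [Ne.symm ha, ha]

lemma sandwich' {p : ℕ} (Y Z : Matrix (Fin p) (Fin p) ℝ) (s t a b : Fin p) (m : ℝ) :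
    (Y * single s t m * Z) a b = Y a s * m * Z t b := by
  rw [Matrix.mul_assoc, Matrix.mul_apply]
  rw [Finset.sum_eq_single s]
  · simp [mul_assoc]
  · intro k _ hk; simp [Matrix.single_mul_apply_of_ne (h := hk)]
  · simp


set_option maxHeartbeats 1000000

/-- Woodbury formula for the symmetric rank-two update
`B = A + δ(eᵢeⱼᵀ + eⱼeᵢᵀ)` with `i ≠ j`: if
`q(δ) = −Δ δ² + 2 Yᵢⱼ δ + 1 ≠ 0`, where `Y = A⁻¹` and `Δ = Yᵢᵢ Yⱼⱼ − Yᵢⱼ²`,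
then `B` is invertible and `(B⁻¹)ᵢⱼ = (−Δ δ + Yᵢⱼ)/q(δ)`. -/
theorem inv_entry_offdiag_update {p : ℕ} (A : Matrix (Fin p) (Fin p) ℝ)
    (hsymm : A.IsSymm) (hA : IsUnit A.det) (i j : Fin p) (hij : i ≠ j) (δ : ℝ)
    (hq : -(A⁻¹ i i * A⁻¹ j j - (A⁻¹ i j) ^ 2) * δ ^ 2 + 2 * A⁻¹ i j * δ + 1 ≠ 0) :
    IsUnit (A + Matrix.single i j δ + Matrix.single j i δ).det ∧
    (A + Matrix.single i j δ + Matrix.single j i δ)⁻¹ i j =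
      (-(A⁻¹ i i * A⁻¹ j j - (A⁻¹ i j) ^ 2) * δ + A⁻¹ i j) /
        (-(A⁻¹ i i * A⁻¹ j j - (A⁻¹ i j) ^ 2) * δ ^ 2 + 2 * A⁻¹ i j * δ + 1) := by
  set Y := A⁻¹ with hY
  set a := Y i i with ha
  set b := Y j j with hb
  set c := Y i j with hc
  set q : ℝ := -(a * b - c ^ 2) * δ ^ 2 + 2 * c * δ + 1 with hqdef
  have hYsymm : Y.IsSymm := by
    rw [hY, Matrix.IsSymm, Matrix.transpose_nonsing_inv, hsymm.eq]
  have hYji : Y j i = c := (hYsymm.apply j i).symm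
  have hAY : A * Y = 1 := Matrix.mul_nonsing_inv A hA
  set E : Matrix (Fin p) (Fin p) ℝ := single i j δ + single j i δ with hE
  set P : Matrix (Fin p) (Fin p) ℝ :=
      single i i (δ / q * (-δ * b)) + single i j (δ / q * (1 + δ * c)) +
      single j i (δ / q * (1 + δ * c)) + single j j (δ / q * (-δ * a)) with hP
  have key : P + E * Y * P = E := by
    rw [hE, hP]
    simp only [add_mul, mul_add, sandwich, hYji, ← ha, ← hb, ← hc]
    ext k l
    by_cases hk : k = i <;> by_cases hk' : k = j <;> by_cases hl : l = i <;> by_cases hl' : l = j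
    all_goals first
      | (exact absurd (hk ▸ hk' ▸ rfl : (i:Fin p) = j) hij)
      | (exact absurd (hl ▸ hl' ▸ rfl : (i:Fin p) = j) hij)
      | skip
    · subst hk hl
      simp [Matrix.add_apply, hij, Ne.symm hij]
      field_simp; ring
    · subst hk hl'
      simp [Matrix.add_apply, hij, Ne.symm hij]
      field_simp; ring
    · subst hk
      simp [Matrix.add_apply, hij, Ne.symm hij, Ne.symm hl, Ne.symm hl']
    · subst hk' hl
      simp [Matrix.add_apply, hij, Ne.symm hij]
      field_simp; ring
    · subst hk' hl'
      simp [Matrix.add_apply, hij, Ne.symm hij]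
      field_simp; ring
    · subst hk'
      simp [Matrix.add_apply, hij, Ne.symm hij, Ne.symm hl, Ne.symm hl']
    · subst hl
      simp [Matrix.add_apply, Ne.symm hk, Ne.symm hk']
    · subst hl'
      simp [Matrix.add_apply, Ne.symm hk, Ne.symm hk']
    · simp [Matrix.add_apply, Ne.symm hk, Ne.symm hk', Ne.symm hl, Ne.symm hl']
  set N : Matrix (Fin p) (Fin p) ℝ := Y - Y * P * Y with hN
  have h2 : P * Y + E * Y * P * Y = E * Y := by
    rw [← add_mul, key]
  have hBN : (A + single i j δ + single j i δ) * N = 1 := by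
    have hBE : A + single i j δ + single j i δ = A + E := by
      rw [hE, add_assoc]
    rw [hBE, hN]
    have expand : (A + E) * (Y - Y * P * Y) = A * Y + E * Y - (A * Y * P * Y + E * Y * P * Y) := by
      simp only [add_mul, mul_sub, ← Matrix.mul_assoc]
    rw [expand, hAY, one_mul, h2]
    abel
  constructor
  · exact Matrix.isUnit_det_of_right_inverse hBN
  · rw [Matrix.inv_eq_right_inv hBN, hN]
    have hPY : (Y * P * Y) i j = a * (δ / q * (-δ * b)) * c + a * (δ / q * (1 + δ * c)) * b
        + c * (δ / q * (1 + δ * c)) * c + c * (δ / q * (-δ * a)) * b := by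
      rw [hP]
      simp only [mul_add, add_mul, Matrix.add_apply, sandwich', hYji, ← ha, ← hb, ← hc]
    rw [Matrix.sub_apply, hPY, ← hc]
    field_simp
    ring
end

section
/- Let A be a symmetric invertible p×p real matrix with inverse Y = A⁻¹, let i ≠ j be indices, set Δ = Y_{ii}·Y_{jj} − Y_{ij}², and let δ ∈ ℝ. Then det(A + δ·(e_i e_jᵀ + e_j e_iᵀ)) = det(A)·(−Δ·δ² + 2·Y_{ij}·δ + 1). -/
open Matrix

/-- Determinant of the symmetric rank-two update: for symmetric invertible `A`
with `Y = A⁻¹`, `i ≠ j`, and `Δ = Yᵢᵢ Yⱼⱼ − Yᵢⱼ²`,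
`det(A + δ(eᵢeⱼᵀ + eⱼeᵢᵀ)) = det A · (−Δ δ² + 2 Yᵢⱼ δ + 1)`. -/
theorem det_offdiag_update {p : ℕ} (A : Matrix (Fin p) (Fin p) ℝ)
    (hsymm : A.IsSymm) (hA : IsUnit A.det) (i j : Fin p) (hij : i ≠ j) (δ : ℝ) :
    (A + Matrix.single i j δ + Matrix.single j i δ).det =
      A.det * (-(A⁻¹ i i * A⁻¹ j j - (A⁻¹ i j) ^ 2) * δ ^ 2 + 2 * A⁻¹ i j * δ + 1) := by
  have hYs : A⁻¹ j i = A⁻¹ i j := by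
    have : (A⁻¹)ᵀ = A⁻¹ := by
      rw [Matrix.transpose_nonsing_inv, hsymm.eq]
    conv_lhs => rw [← this]
    rfl
  set U : Matrix (Fin p) (Fin 2) ℝ :=
    Matrix.of fun k a => if a = 0 then (if k = i then δ else 0) else (if k = j then δ else 0) with hU
  set V : Matrix (Fin 2) (Fin p) ℝ :=
    Matrix.of fun a k => if a = 0 then (if k = j then (1:ℝ) else 0) else (if k = i then 1 else 0) with hV
  have hUV : U * V = Matrix.single i j δ + Matrix.single j i δ := by
    ext k l
    simp only [hU, hV, Matrix.mul_apply, Fin.sum_univ_two, Matrix.of_apply,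
      Matrix.add_apply, Matrix.single]
    by_cases hk : k = i <;> by_cases hl : l = j <;> by_cases hk' : k = j <;>
      by_cases hl' : l = i <;> simp_all <;> simp_all [eq_comm]
  have key : (A + U * V).det = A.det * (1 + V * (A⁻¹ * U)).det := by
    have h1 : A + U * V = A * (1 + A⁻¹ * U * V) := by
      rw [mul_add, mul_one, ← Matrix.mul_assoc, ← Matrix.mul_assoc,
        Matrix.mul_nonsing_inv A hA, Matrix.one_mul]
    rw [h1, det_mul, Matrix.det_one_add_mul_comm]
  have hent : ∀ a b, (V * (A⁻¹ * U)) a b =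
      (if a = 0 then (if b = 0 then δ * A⁻¹ j i else δ * A⁻¹ j j)
       else (if b = 0 then δ * A⁻¹ i i else δ * A⁻¹ i j)) := by
    intro a b
    have hAU : ∀ k, (A⁻¹ * U) k b = if b = 0 then A⁻¹ k i * δ else A⁻¹ k j * δ := by
      intro k
      simp [hU, Matrix.mul_apply, mul_ite, mul_zero, Finset.sum_ite_eq']
    simp only [Matrix.mul_apply, hAU, hV, Matrix.of_apply, ite_mul, one_mul, zero_mul]
    split <;> split <;> simp [Finset.sum_ite_eq'] <;> ring
  have h2 : (1 + V * (A⁻¹ * U)).det =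
      -(A⁻¹ i i * A⁻¹ j j - (A⁻¹ i j) ^ 2) * δ ^ 2 + 2 * A⁻¹ i j * δ + 1 := by
    rw [Matrix.det_fin_two]
    simp only [Matrix.add_apply, Matrix.one_apply, hent]
    norm_num
    rw [hYs]
    ring
  have : A + Matrix.single i j δ + Matrix.single j i δ = A + U * V := by
    rw [hUV, add_assoc]
  rw [this, key, h2]
end

section
/- Let a > 0, b > 0, y ∈ ℝ with Δ := a·b − y² > 0, and let d ≠ 0. Define δ* = y/Δ + (Δ − √(Δ² + 4·d²·a·b))/(2·Δ·d). Then −Δ·δ* + y = d·(−Δ·(δ*)² + 2·y·δ* + 1) and −Δ·(δ*)² + 2·y·δ* + 1 = (√(Δ² + 4·d²·a·b) − Δ)/(2·d²) > 0; consequently δ* lies in the domain {δ : −Δ·δ² + 2·y·δ + 1 > 0} and is a stationary point of g(δ) = −log(−Δ·δ² + 2·y·δ + 1) + 2·d·δ there. -/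
/-- The scalar off-diagonal subproblem with `d ≠ 0`: with `Δ = a b − y² > 0` and
`δ* = y/Δ + (Δ − √(Δ² + 4 d² a b))/(2 Δ d)`, one has
`−Δ δ* + y = d q(δ*)` and `q(δ*) = (√(Δ² + 4 d² a b) − Δ)/(2 d²) > 0`, where
`q(δ) = −Δ δ² + 2 y δ + 1`; consequently `δ*` lies in the domain of
`g(δ) = −log q(δ) + 2 d δ` and is a stationary point of `g`. -/
theorem scalar_offdiag_subproblem_d_nonzero (a b y d : ℝ)
    (ha : 0 < a) (hb : 0 < b) (hΔ : 0 < a * b - y ^ 2) (hd : d ≠ 0) :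
    let Δ : ℝ := a * b - y ^ 2;
    let δs : ℝ := y / Δ + (Δ - Real.sqrt (Δ ^ 2 + 4 * d ^ 2 * a * b)) / (2 * Δ * d);
    let q : ℝ → ℝ := fun δ => -Δ * δ ^ 2 + 2 * y * δ + 1;
    (-Δ * δs + y = d * q δs) ∧
    q δs = (Real.sqrt (Δ ^ 2 + 4 * d ^ 2 * a * b) - Δ) / (2 * d ^ 2) ∧
    0 < q δs ∧
    HasDerivAt (fun δ : ℝ => -Real.log (q δ) + 2 * d * δ) 0 δs := by
  intro Δ δs q
  have hΔdef : Δ = a * b - y ^ 2 := rfl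
  have hΔ' : (0:ℝ) < Δ := hΔ
  have hΔ0 : Δ ≠ 0 := ne_of_gt hΔ'
  have hd2 : (0:ℝ) < d ^ 2 := by positivity
  set s : ℝ := Real.sqrt (Δ ^ 2 + 4 * d ^ 2 * a * b) with hs_def
  have hsnn : (0:ℝ) ≤ Δ ^ 2 + 4 * d ^ 2 * a * b := by positivity
  have hs2 : s ^ 2 = Δ ^ 2 + 4 * d ^ 2 * a * b := Real.sq_sqrt hsnn
  have hs_gt : Δ < s := by
    nlinarith [Real.sqrt_nonneg (Δ ^ 2 + 4 * d ^ 2 * a * b), hs2, mul_pos ha hb]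
  have ht : Δ * δs - y = (Δ - s) / (2 * d) := by
    show Δ * (y / Δ + (Δ - s) / (2 * Δ * d)) - y = (Δ - s) / (2 * d)
    field_simp
    ring
  have ht2 : (Δ * δs - y) ^ 2 * (2 * d ^ 2) = Δ ^ 2 + 2 * d ^ 2 * a * b - Δ * s := by
    rw [ht, div_pow]
    rw [div_mul_eq_mul_div]
    rw [div_eq_iff (by positivity : ((2*d)^2:ℝ) ≠ 0)]
    linear_combination (2 * d ^ 2) * hs2
  have hkey : Δ * q δs = a * b - (Δ * δs - y) ^ 2 := by
    show Δ * (-Δ * δs ^ 2 + 2 * y * δs + 1) = a * b - (Δ * δs - y) ^ 2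
    linear_combination hΔdef
  have hmul : q δs * (2 * d ^ 2) = s - Δ := by
    have h5 : Δ * (q δs * (2 * d ^ 2)) = Δ * (s - Δ) := by
      linear_combination (2 * d ^ 2) * hkey - ht2
    exact mul_left_cancel₀ hΔ0 h5
  have hq : q δs = (s - Δ) / (2 * d ^ 2) := by
    rw [eq_div_iff (by positivity : (2 * d ^ 2 : ℝ) ≠ 0)]
    exact hmul
  have hqpos : 0 < q δs := by
    rw [hq]
    have : (0:ℝ) < s - Δ := sub_pos.mpr hs_gt
    positivity
  have hlin : -Δ * δs + y = d * q δs := by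
    have : -Δ * δs + y = -(Δ * δs - y) := by ring
    rw [this, ht, hq]
    field_simp
    ring
  refine ⟨hlin, hq, hqpos, ?_⟩
  have hqne : q δs ≠ 0 := ne_of_gt hqpos
  have h1 : HasDerivAt (fun δ : ℝ => δ ^ 2) (2 * δs) δs := by
    simpa using hasDerivAt_pow 2 δs
  have h2 := h1.const_mul (-Δ)
  have h3 := (hasDerivAt_id δs).const_mul (2 * y)
  have hpoly : HasDerivAt q (-Δ * (2 * δs) + 2 * y * 1) δs :=
    (h2.add h3).add_const 1
  have hlog : HasDerivAt (fun δ : ℝ => Real.log (q δ)) ((q δs)⁻¹ * (-Δ * (2 * δs) + 2 * y * 1)) δs :=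
    (Real.hasDerivAt_log hqne).comp δs hpoly
  have h2d : HasDerivAt (fun δ : ℝ => 2 * d * δ) (2 * d * 1) δs :=
    (hasDerivAt_id δs).const_mul (2 * d)
  have final := (hlog.neg).add h2d
  have h0 : -((q δs)⁻¹ * (-Δ * (2 * δs) + 2 * y * 1)) + 2 * d * 1 = 0 := by
    have h6 : -Δ * (2 * δs) + 2 * y * 1 = 2 * d * q δs := by linear_combination 2 * hlin
    rw [h6]
    field_simp
    ring
  rw [h0] at final
  exact final
end

section
/- Let Σ̂ be a p×p real symmetric positive definite matrix, μ > 0, λ > 0, and let L be a p×p real symmetric positive semidefinite matrix. Suppose S is a p×p real symmetric positive definite matrix that is a local minimizer, over the set of p×p real symmetric positive definite matrices, of the map S' ↦ f(L, S') + λ‖S'‖₀. Then for every pair of indices (i,j) with S_{ij} ≠ 0, one has [(L+S)⁻¹]_{ij} = [Σ̂⁻¹]_{ij}. -/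
open Matrix
open Polynomial

/-- Frobenius norm. -/
noncomputable def frobNorm {p : ℕ} (A : Matrix (Fin p) (Fin p) ℝ) : ℝ :=
  Real.sqrt (∑ i, ∑ j, (A i j) ^ 2)


/-- The symmetric perturbation matrix with ones at `(i,j)` and `(j,i)`. -/
noncomputable def auxE {p : ℕ} (i j : Fin p) : Matrix (Fin p) (Fin p) ℝ :=
  Matrix.single i j (1:ℝ) + Matrix.single j i (1:ℝ)

lemma auxE_apply {p : ℕ} (i j a b : Fin p) :
    auxE i j a b =
      (if i = a ∧ j = b then (1:ℝ) else 0) + (if j = a ∧ i = b then (1:ℝ) else 0) := by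
  simp [auxE, Matrix.single, Matrix.add_apply]

lemma auxE_herm {p : ℕ} (i j : Fin p) : (auxE i j).IsHermitian := by
  unfold Matrix.IsHermitian
  ext a b
  simp only [auxE, Matrix.conjTranspose_apply, Matrix.add_apply, Matrix.single,
    Matrix.of_apply, star_trivial]
  have e1 : (if i = b ∧ j = a then (1:ℝ) else 0) = (if j = a ∧ i = b then 1 else 0) := by
    by_cases h : i = b ∧ j = a
    · rw [if_pos h, if_pos ⟨h.2, h.1⟩]
    · rw [if_neg h, if_neg (fun hc => h ⟨hc.2, hc.1⟩)]
  have e2 : (if j = b ∧ i = a then (1:ℝ) else 0) = (if i = a ∧ j = b then 1 else 0) := by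
    by_cases h : j = b ∧ i = a
    · rw [if_pos h, if_pos ⟨h.2, h.1⟩]
    · rw [if_neg h, if_neg (fun hc => h ⟨hc.2, hc.1⟩)]
  rw [e1, e2, add_comm]

lemma auxE_quad {p : ℕ} (i j : Fin p) (x : Fin p → ℝ) :
    x ⬝ᵥ ((auxE i j) *ᵥ x) = 2 * (x i * x j) := by
  simp only [auxE, Matrix.add_mulVec, dotProduct_add]
  simp [dotProduct, Matrix.mulVec, Matrix.single, ite_and,
    Finset.sum_ite_eq, Finset.sum_ite_eq', Finset.mul_sum, mul_ite]
  ring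

lemma auxE_quad_bound {p : ℕ} (i j : Fin p) (x : Fin p → ℝ) :
    |x ⬝ᵥ ((auxE i j) *ᵥ x)| ≤ 2 * (x ⬝ᵥ x) := by
  rw [auxE_quad]
  have hxx : x ⬝ᵥ x = ∑ k, (x k)^2 := by simp [dotProduct, sq]
  have hi : (x i)^2 ≤ ∑ k, (x k)^2 :=
    Finset.single_le_sum (fun k _ => sq_nonneg (x k)) (Finset.mem_univ i)
  have hj : (x j)^2 ≤ ∑ k, (x k)^2 :=
    Finset.single_le_sum (fun k _ => sq_nonneg (x k)) (Finset.mem_univ j)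
  rw [hxx, abs_le]
  constructor <;> nlinarith [sq_nonneg (x i + x j), sq_nonneg (x i - x j)]

lemma auxE_sq_le {p : ℕ} (i j a b : Fin p) : (auxE i j a b)^2 ≤ 4 := by
  rw [auxE_apply]
  split_ifs <;> norm_num

lemma aux_trace_std_mul {p : ℕ} (i j : Fin p) (M : Matrix (Fin p) (Fin p) ℝ) :
    ((Matrix.single i j (1:ℝ)) * M).trace = M j i := by
  simp [Matrix.trace, Matrix.diag, Matrix.mul_apply, Matrix.single, ite_and,
    Finset.sum_ite_eq, Finset.sum_ite_eq']

lemma aux_trace_mul_std {p : ℕ} (i j : Fin p) (M : Matrix (Fin p) (Fin p) ℝ) :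
    (M * (Matrix.single i j (1:ℝ))).trace = M j i := by
  simp [Matrix.trace, Matrix.diag, Matrix.mul_apply, Matrix.single, ite_and,
    Finset.sum_ite_eq, Finset.sum_ite_eq']

lemma aux_quad_lower {p : ℕ} (S : Matrix (Fin p) (Fin p) ℝ) (hS : S.PosDef) :
    ∃ c : ℝ, 0 < c ∧ ∀ x : Fin p → ℝ, c * (x ⬝ᵥ x) ≤ x ⬝ᵥ (S *ᵥ x) := by
  obtain ⟨B, hB⟩ : ∃ B : Matrix (Fin p) (Fin p) ℝ, S = Bᴴ * B := by
    open scoped MatrixOrder in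
    obtain ⟨X, hX, -, hXX⟩ :=
      CFC.exists_sqrt_of_isSelfAdjoint_of_quasispectrumRestricts hS.posSemidef.isHermitian
        (QuasispectrumRestricts.nnreal_of_nonneg hS.posSemidef.nonneg)
    exact ⟨X, by rw [show Xᴴ = X from hX.star_eq]; exact hXX.symm⟩
  set K : ℝ := ∑ k, ∑ l, (B⁻¹ k l)^2 with hK
  have hK0 : 0 ≤ K := Finset.sum_nonneg fun _ _ => Finset.sum_nonneg fun _ _ => sq_nonneg _
  have hK1 : (0:ℝ) < K + 1 := by linarith
  refine ⟨(K+1)⁻¹, by positivity, fun x => ?_⟩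
  have hdetB : IsUnit B.det := by
    have h0 : S.det ≠ 0 := ne_of_gt hS.det_pos
    rw [hB, Matrix.det_mul] at h0
    exact isUnit_iff_ne_zero.mpr (right_ne_zero_of_mul h0)
  set y := B *ᵥ x with hy
  have hxy : x = B⁻¹ *ᵥ y := by
    rw [hy, Matrix.mulVec_mulVec, Matrix.nonsing_inv_mul B hdetB, Matrix.one_mulVec]
  have h1 : x ⬝ᵥ (S *ᵥ x) = y ⬝ᵥ y := by
    rw [hB, ← Matrix.mulVec_mulVec, Matrix.dotProduct_mulVec,
      Matrix.conjTranspose_eq_transpose_of_trivial, Matrix.vecMul_transpose]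
  have hyy : 0 ≤ y ⬝ᵥ y := by
    simp only [dotProduct, ← sq]
    exact Finset.sum_nonneg fun _ _ => sq_nonneg _
  have h2 : x ⬝ᵥ x ≤ K * (y ⬝ᵥ y) := by
    have hxx : x ⬝ᵥ x = ∑ k, (∑ l, B⁻¹ k l * y l)^2 := by
      simp only [dotProduct, ← sq]
      congr 1; ext k
      rw [hxy]; rfl
    rw [hxx]
    have hstep : ∀ k : Fin p, (∑ l, B⁻¹ k l * y l)^2 ≤
        (∑ l, (B⁻¹ k l)^2) * (∑ l, (y l)^2) := fun k =>
      Finset.sum_mul_sq_le_sq_mul_sq Finset.univ _ _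
    calc ∑ k, (∑ l, B⁻¹ k l * y l)^2 ≤ ∑ k, (∑ l, (B⁻¹ k l)^2) * (∑ l, (y l)^2) :=
          Finset.sum_le_sum fun k _ => hstep k
      _ = K * (y ⬝ᵥ y) := by
          rw [hK, ← Finset.sum_mul]
          congr 1
          simp only [dotProduct, ← sq]
  rw [h1, inv_mul_le_iff₀ hK1]
  nlinarith [h2, hyy]

lemma aux_deriv {p : ℕ} (A B E : Matrix (Fin p) (Fin p) ℝ) (hA : A.PosDef)
    (μ cL : ℝ) :
    HasDerivAt (fun t : ℝ => cL + μ * (((A + t • E) * B).trace -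
        Real.log ((A + t • E).det)))
      (μ * ((E * B).trace - (A⁻¹ * E).trace)) 0 := by
  have hdet0 : A.det ≠ 0 := ne_of_gt hA.det_pos
  set M : Matrix (Fin p) (Fin p) ℝ := A⁻¹ * E with hM
  set q : Polynomial ℝ := (Matrix.det (1 + (X : ℝ[X]) • M.map C)).divX.divX with hq
  set c₁ : ℝ := M.trace with hc₁
  have hfac : ∀ t : ℝ, (A + t • E).det = A.det * (1 + c₁ * t + q.eval t * t^2) := by
    intro t
    have h1 : A + t • E = A * (1 + t • M) := by
      rw [mul_add, mul_one, Matrix.mul_smul, hM, ← Matrix.mul_assoc,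
        Matrix.mul_nonsing_inv A (isUnit_iff_ne_zero.mpr hdet0), Matrix.one_mul]
    rw [h1, Matrix.det_mul, Matrix.det_one_add_smul]
  have hg : HasDerivAt (fun t : ℝ => A.det * (1 + c₁ * t + q.eval t * t^2))
      (A.det * c₁) 0 := by
    have h1 : HasDerivAt (fun t : ℝ => c₁ * t) c₁ 0 := by
      simpa using (hasDerivAt_id (0:ℝ)).const_mul c₁
    have h2 : HasDerivAt (fun t : ℝ => q.eval t * t^2) 0 0 := by
      have := (q.hasDerivAt (0:ℝ)).mul (hasDerivAt_pow 2 (0:ℝ))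
      simpa [Pi.mul_def] using this
    have := (((hasDerivAt_const (0:ℝ) (1:ℝ)).add h1).add h2).const_mul A.det
    simpa using this
  have hglog : HasDerivAt (fun t : ℝ => Real.log (A.det * (1 + c₁ * t + q.eval t * t^2)))
      c₁ 0 := by
    have hval : A.det * (1 + c₁ * 0 + q.eval 0 * 0^2) = A.det := by ring
    have := hg.log (by rw [hval]; exact hdet0)
    convert this using 1
    rw [hval]
    field_simp
  have htr : HasDerivAt (fun t : ℝ => (A * B).trace + (E * B).trace * t)
      ((E * B).trace) 0 := by
    simpa using ((hasDerivAt_id (0:ℝ)).const_mul ((E*B).trace)).const_add ((A*B).trace)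
  have hfull := (((htr.sub hglog).const_mul μ).const_add cL)
  have hfun : (fun t : ℝ => cL + μ * (((A + t • E) * B).trace -
        Real.log ((A + t • E).det))) = (fun t : ℝ => cL + μ *
        (((A * B).trace + (E * B).trace * t) -
          Real.log (A.det * (1 + c₁ * t + q.eval t * t^2)))) := by
    funext t
    rw [show ((A + t • E) * B).trace = (A * B).trace + (E * B).trace * t from by
      rw [Matrix.add_mul, Matrix.trace_add, Matrix.smul_mul, Matrix.trace_smul,
        smul_eq_mul]; ring, hfac]
  rw [hfun]
  exact hfull

lemma aux_dotProduct_self_pos {p : ℕ} (x : Fin p → ℝ) (hx : x ≠ 0) : 0 < x ⬝ᵥ x := by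
  have hxx : x ⬝ᵥ x = ∑ k, (x k)^2 := by simp [dotProduct, sq]
  rw [hxx]
  obtain ⟨k, hk⟩ := Function.ne_iff.mp hx
  exact Finset.sum_pos' (fun l _ => sq_nonneg (x l))
    ⟨k, Finset.mem_univ k, pow_two_pos_of_ne_zero hk⟩

lemma aux_l0_eq {p : ℕ} (i j : Fin p) (S : Matrix (Fin p) (Fin p) ℝ)
    (hsym : ∀ a b, S b a = S a b) (hij : S i j ≠ 0) (t : ℝ) (ht : |t| < |S i j| / 2) :
    l0Norm (S + t • auxE i j) = l0Norm S := by
  unfold l0Norm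
  congr 1
  ext ⟨a, b⟩
  simp only [Set.mem_setOf_eq, Matrix.add_apply, Matrix.smul_apply, smul_eq_mul]
  by_cases h0 : auxE i j a b = 0
  · rw [h0]; simp
  · have habs : |auxE i j a b| ≤ 2 := by
      rw [auxE_apply]; split_ifs <;> norm_num
    have hSab : S a b = S i j := by
      rw [auxE_apply] at h0
      by_cases h1 : i = a ∧ j = b
      · rw [← h1.1, ← h1.2]
      · by_cases h2 : j = a ∧ i = b
        · rw [← h2.1, ← h2.2]; exact hsym i j
        · exfalso; rw [if_neg h1, if_neg h2] at h0; simp at h0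
    rw [hSab]
    constructor
    · intro _; exact hij
    · intro _ hc
      have habs2 : |S i j| = |t| * |auxE i j a b| := by
        have hsi : S i j = -(t * auxE i j a b) := by linarith
        rw [hsi, abs_neg, abs_mul]
      nlinarith [abs_nonneg t, abs_pos.mpr hij]

lemma aux_frob {p : ℕ} (i j : Fin p) (t : ℝ) :
    frobNorm (t • auxE i j) ≤ (2 * (p:ℝ) + 1) * |t| := by
  unfold frobNorm
  have hsum : ∑ a, ∑ b, ((t • auxE i j) a b)^2 ≤ ((2 * (p:ℝ) + 1) * |t|)^2 := by
    have hle : ∑ a, ∑ b, ((t • auxE i j) a b)^2 ≤ ∑ _a : Fin p, ∑ _b : Fin p, 4 * t^2 := by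
      refine Finset.sum_le_sum fun a _ => Finset.sum_le_sum fun b _ => ?_
      have := auxE_sq_le i j a b
      simp only [Matrix.smul_apply, smul_eq_mul, mul_pow]
      nlinarith [sq_nonneg t]
    have hcard : ∑ _a : Fin p, ∑ _b : Fin p, (4 * t^2 : ℝ) = (p:ℝ)^2 * (4 * t^2) := by
      simp [Finset.sum_const]
      ring
    rw [hcard] at hle
    have h4 : (p:ℝ)^2 * (4*t^2) ≤ ((2*(p:ℝ)+1) * |t|)^2 := by
      have : |t|^2 = t^2 := sq_abs t
      nlinarith [sq_nonneg t, Nat.cast_nonneg (α := ℝ) p]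
    linarith
  calc Real.sqrt (∑ a, ∑ b, ((t • auxE i j) a b)^2)
      ≤ Real.sqrt (((2 * (p:ℝ) + 1) * |t|)^2) := Real.sqrt_le_sqrt hsum
    _ = (2 * (p:ℝ) + 1) * |t| := Real.sqrt_sq (by positivity)

/-- First-order necessary condition at a local minimizer of the ℓ0-regularized
objective `S' ↦ f(L,S') + λ‖S'‖₀` over symmetric positive definite matrices:
at every nonzero entry `(i,j)` of `S`, `[(L+S)⁻¹]ᵢⱼ = [Σ̂⁻¹]ᵢⱼ`. -/
theorem l0_local_min_stationarity {p : ℕ}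
    (SigHat : Matrix (Fin p) (Fin p) ℝ) (hSig : SigHat.PosDef)
    (μ lam : ℝ) (hμ : 0 < μ) (hlam : 0 < lam)
    (L : Matrix (Fin p) (Fin p) ℝ) (hL : L.PosSemidef)
    (S : Matrix (Fin p) (Fin p) ℝ) (hS : S.PosDef)
    (hloc : ∃ ε : ℝ, 0 < ε ∧
      ∀ S' : Matrix (Fin p) (Fin p) ℝ, S'.PosDef → frobNorm (S' - S) < ε →
        faObj μ SigHat L S + lam * (l0Norm S : ℝ) ≤
          faObj μ SigHat L S' + lam * (l0Norm S' : ℝ)) :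
    ∀ i j : Fin p, S i j ≠ 0 → (L + S)⁻¹ i j = SigHat⁻¹ i j := by
  intro i j hij
  obtain ⟨ε, hε, hmin⟩ := hloc
  obtain ⟨c, hc, hquad⟩ := aux_quad_lower S hS
  set E := auxE i j with hE
  set A := L + S with hA'
  have hA : A.PosDef := Matrix.PosDef.posSemidef_add hL hS
  have hSsym : ∀ a b, S b a = S a b := by
    intro a b
    have := hS.1.apply a b
    simpa using this
  -- positive radius
  set δ : ℝ := min (c/2) (min (ε/(2*(p:ℝ)+1)) (|S i j|/2)) with hδdef
  have hp1 : (0:ℝ) < 2*(p:ℝ)+1 := by positivity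
  have hδ : 0 < δ := by
    have : 0 < |S i j| := abs_pos.mpr hij
    apply lt_min (by linarith)
    exact lt_min (by positivity) (by linarith)
  -- positive definiteness of perturbations
  have hPD : ∀ t : ℝ, |t| < c/2 → (S + t • E).PosDef := by
    intro t ht
    refine Matrix.PosDef.of_dotProduct_mulVec_pos (hS.1.add ?_) fun x hx => ?_
    · rw [Matrix.IsHermitian, Matrix.conjTranspose_smul, star_trivial, hE,
        auxE_herm i j]
    · have hxx : 0 < x ⬝ᵥ x := aux_dotProduct_self_pos x hx
      have hqx := hquad x
      have hbx := auxE_quad_bound i j x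
      simp only [star_trivial]
      rw [Matrix.add_mulVec, dotProduct_add, Matrix.smul_mulVec,
        dotProduct_smul, smul_eq_mul]
      nlinarith [neg_abs_le (t * (x ⬝ᵥ (E *ᵥ x))), abs_mul t (x ⬝ᵥ (E *ᵥ x)),
        abs_nonneg t, mul_le_mul_of_nonneg_left hbx (abs_nonneg t),
        mul_pos (sub_pos.mpr ht) hxx]
  -- local minimum of the smooth objective along the line
  set φ : ℝ → ℝ := fun t => faObj μ SigHat L (S + t • E) with hφ
  have hφ0 : φ 0 = faObj μ SigHat L S := by simp [hφ]
  have hlocmin : IsLocalMin φ 0 := by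
    have hball : ∀ᶠ t in nhds (0:ℝ), |t| < δ := by
      filter_upwards [Metric.ball_mem_nhds (0:ℝ) hδ] with t ht
      simpa [Real.dist_eq] using ht
    filter_upwards [hball] with t ht
    have ht1 : |t| < c/2 := lt_of_lt_of_le ht (min_le_left _ _)
    have ht2 : |t| < ε/(2*(p:ℝ)+1) :=
      lt_of_lt_of_le ht ((min_le_right _ _).trans (min_le_left _ _))
    have ht3 : |t| < |S i j|/2 :=
      lt_of_lt_of_le ht ((min_le_right _ _).trans (min_le_right _ _))
    have hpd := hPD t ht1
    have hfrob : frobNorm ((S + t • E) - S) < ε := by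
      rw [add_sub_cancel_left]
      calc frobNorm (t • E) ≤ (2*(p:ℝ)+1) * |t| := aux_frob i j t
        _ < ε := by rw [← lt_div_iff₀' hp1]; exact ht2
    have hl0 := aux_l0_eq i j S hSsym hij t ht3
    have := hmin (S + t • E) hpd hfrob
    rw [hl0] at this
    rw [hφ0]
    simp only [hφ]
    linarith
  -- derivative is zero
  have hd := aux_deriv A SigHat⁻¹ E hA μ L.trace
  have hφeq : φ = fun t : ℝ => L.trace + μ * (((A + t • E) * SigHat⁻¹).trace -
      Real.log ((A + t • E).det)) := by
    funext t
    simp only [hφ, faObj, hA', add_assoc]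
  have hzero : μ * ((E * SigHat⁻¹).trace - (A⁻¹ * E).trace) = 0 :=
    hlocmin.hasDerivAt_eq_zero (hφeq ▸ hd)
  have htreq : (E * SigHat⁻¹).trace = (A⁻¹ * E).trace := by
    rcases mul_eq_zero.mp hzero with h | h
    · exact absurd h (ne_of_gt hμ)
    · linarith
  -- compute traces
  have h1 : (E * SigHat⁻¹).trace = SigHat⁻¹ j i + SigHat⁻¹ i j := by
    rw [hE]
    unfold auxE
    rw [Matrix.add_mul, Matrix.trace_add, aux_trace_std_mul, aux_trace_std_mul]
  have h2 : (A⁻¹ * E).trace = A⁻¹ j i + A⁻¹ i j := by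
    rw [hE]
    unfold auxE
    rw [Matrix.mul_add, Matrix.trace_add, aux_trace_mul_std, aux_trace_mul_std]
  -- symmetry of the inverses
  have hBsym : SigHat⁻¹ j i = SigHat⁻¹ i j := by
    have := (hSig.1.inv).apply i j
    simpa using this
  have hAsym : A⁻¹ j i = A⁻¹ i j := by
    have := (hA.1.inv).apply i j
    simpa using this
  rw [h1, h2, hBsym, hAsym] at htreq
  show A⁻¹ i j = SigHat⁻¹ i j
  linarith
end

section
/- Let Σ̂ be a p×p real symmetric positive definite matrix, μ > 0, τ > 0, and let L̂ be a p×p real symmetric positive semidefinite matrix. Suppose Ŝ is a p×p real symmetric positive definite matrix that is a local minimizer, over the set of p×p real symmetric positive definite matrices, of the map S ↦ f(L̂, S) + τ‖S‖₁. Then for every index i, μ·[(L̂+Ŝ)⁻¹]_{ii} = μ·[Σ̂⁻¹]_{ii} + τ, and for every pair i ≠ j with Ŝ_{ij} ≠ 0, μ·[(L̂+Ŝ)⁻¹]_{ij} = μ·[Σ̂⁻¹]_{ij} + τ·sign(Ŝ_{ij}). -/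
open Matrix

open Polynomial

section Helpers


variable {p : ℕ}

lemma quad_abs_le (E : Matrix (Fin p) (Fin p) ℝ) (x : Fin p → ℝ) :
    |x ⬝ᵥ E *ᵥ x| ≤ (∑ i, ∑ j, |E i j|) * (x ⬝ᵥ x) := by
  have hxx : ∀ i j : Fin p, |x i| * |x j| ≤ x ⬝ᵥ x := by
    intro i j
    have h1 : x i ^ 2 ≤ x ⬝ᵥ x := by
      simpa [dotProduct, sq] using Finset.single_le_sum
        (f := fun k => x k * x k) (fun k _ => mul_self_nonneg (x k)) (Finset.mem_univ i)
    have h2 : x j ^ 2 ≤ x ⬝ᵥ x := by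
      simpa [dotProduct, sq] using Finset.single_le_sum
        (f := fun k => x k * x k) (fun k _ => mul_self_nonneg (x k)) (Finset.mem_univ j)
    nlinarith [sq_nonneg (|x i| - |x j|), sq_abs (x i), sq_abs (x j)]
  have hval : x ⬝ᵥ E *ᵥ x = ∑ i, ∑ j, x i * (E i j * x j) := by
    simp [dotProduct, mulVec, Finset.mul_sum]
  rw [hval, Finset.sum_mul]
  refine (Finset.abs_sum_le_sum_abs _ _).trans (Finset.sum_le_sum fun i _ => ?_)
  rw [Finset.sum_mul]
  refine (Finset.abs_sum_le_sum_abs _ _).trans (Finset.sum_le_sum fun j _ => ?_)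
  rw [abs_mul, abs_mul]
  calc |x i| * (|E i j| * |x j|) = |E i j| * (|x i| * |x j|) := by ring
  _ ≤ |E i j| * (x ⬝ᵥ x) := by
      exact mul_le_mul_of_nonneg_left (hxx i j) (abs_nonneg _)

lemma cauchy_schwarz_psd {A : Matrix (Fin p) (Fin p) ℝ} (hA : A.PosSemidef)
    (x y : Fin p → ℝ) :
    (x ⬝ᵥ A *ᵥ y) ^ 2 ≤ (x ⬝ᵥ A *ᵥ x) * (y ⬝ᵥ A *ᵥ y) := by
  have hsymm : ∀ u v : Fin p → ℝ, u ⬝ᵥ A *ᵥ v = v ⬝ᵥ A *ᵥ u := by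
    intro u v
    have hAt : Aᵀ = A := by
      ext i j
      simpa using (hA.isHermitian.apply j i).symm
    conv_lhs => rw [dotProduct_mulVec, ← hAt, vecMul_transpose]
    rw [dotProduct_comm]
  have key : ∀ t : ℝ, 0 ≤ (y ⬝ᵥ A *ᵥ y) * (t * t) + (2 * (x ⬝ᵥ A *ᵥ y)) * t + (x ⬝ᵥ A *ᵥ x) := by
    intro t
    have h0 := hA.dotProduct_mulVec_nonneg (x + t • y)
    rw [star_trivial] at h0
    have : (x + t • y) ⬝ᵥ A *ᵥ (x + t • y)
        = (y ⬝ᵥ A *ᵥ y) * (t * t) + (2 * (x ⬝ᵥ A *ᵥ y)) * t + (x ⬝ᵥ A *ᵥ x) := by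
      rw [mulVec_add, dotProduct_add, add_dotProduct, add_dotProduct,
        mulVec_smul, dotProduct_smul, smul_dotProduct, smul_dotProduct,
        dotProduct_smul, hsymm y x]
      simp [smul_eq_mul]; ring
    rw [this] at h0
    simpa using h0
  have hd := discrim_le_zero key
  rw [discrim] at hd
  nlinarith [hd]

lemma posdef_lower {A : Matrix (Fin p) (Fin p) ℝ} (hA : A.PosDef) :
    ∃ c : ℝ, 0 < c ∧ ∀ x : Fin p → ℝ, c * (x ⬝ᵥ x) ≤ x ⬝ᵥ A *ᵥ x := by
  set B := A⁻¹ with hB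
  have hBpd : B.PosDef := hA.inv
  set K : ℝ := ∑ i, ∑ j, |B i j| with hK
  have hK0 : 0 ≤ K := Finset.sum_nonneg fun i _ => Finset.sum_nonneg fun j _ => abs_nonneg _
  refine ⟨1 / (K + 1), by positivity, fun x => ?_⟩
  rcases eq_or_ne x 0 with rfl | hx
  · simp
  have hxx : 0 < x ⬝ᵥ x := by
    have := dotProduct_star_self_pos_iff (v := x) |>.2 hx
    simpa using this
  have hAB : A * B = 1 := mul_nonsing_inv A hA.det_pos.ne'.isUnit
  have h1 : x ⬝ᵥ A *ᵥ (B *ᵥ x) = x ⬝ᵥ x := by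
    rw [mulVec_mulVec, hAB, one_mulVec]
  have h2 : (B *ᵥ x) ⬝ᵥ A *ᵥ (B *ᵥ x) = x ⬝ᵥ B *ᵥ x := by
    have hsymm : ∀ u v : Fin p → ℝ, u ⬝ᵥ A *ᵥ v = v ⬝ᵥ A *ᵥ u := by
      intro u v
      have hAt : Aᵀ = A := by
        ext i j
        simpa using (hA.isHermitian.apply j i).symm
      conv_lhs => rw [dotProduct_mulVec, ← hAt, vecMul_transpose]
      rw [dotProduct_comm]
    rw [hsymm, mulVec_mulVec, hAB, one_mulVec, dotProduct_comm]
  have hcs := cauchy_schwarz_psd hA.posSemidef x (B *ᵥ x)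
  rw [h1, h2] at hcs
  have hbound : x ⬝ᵥ B *ᵥ x ≤ K * (x ⬝ᵥ x) := le_trans (le_abs_self _) (quad_abs_le B x)
  have hApos : 0 < x ⬝ᵥ A *ᵥ x := by
    have := hA.dotProduct_mulVec_pos hx
    simpa using this
  rw [div_mul_eq_mul_div, one_mul, div_le_iff₀ (by positivity)]
  nlinarith [hcs, hbound, hxx, hApos]

lemma posdef_perturb {A : Matrix (Fin p) (Fin p) ℝ} (E : Matrix (Fin p) (Fin p) ℝ)
    (hA : A.PosDef) (hE : E.IsHermitian) :
    ∃ δ : ℝ, 0 < δ ∧ ∀ t : ℝ, |t| < δ → (A + t • E).PosDef := by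
  obtain ⟨c, hc, hlow⟩ := posdef_lower hA
  set M : ℝ := ∑ i, ∑ j, |E i j| with hM
  have hM0 : 0 ≤ M := Finset.sum_nonneg fun i _ => Finset.sum_nonneg fun j _ => abs_nonneg _
  refine ⟨c / (M + 1), by positivity, fun t ht => ?_⟩
  refine Matrix.PosDef.of_dotProduct_mulVec_pos ?_ ?_
  · refine hA.isHermitian.add ?_
    show (t • E)ᴴ = t • E
    rw [conjTranspose_smul, star_trivial, hE]
  intro x hx
  rw [star_trivial]
  have hxx : 0 < x ⬝ᵥ x := by
    have := dotProduct_star_self_pos_iff (v := x) |>.2 hx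
    simpa using this
  have hsplit : x ⬝ᵥ (A + t • E) *ᵥ x = x ⬝ᵥ A *ᵥ x + t * (x ⬝ᵥ E *ᵥ x) := by
    rw [add_mulVec, dotProduct_add, smul_mulVec, dotProduct_smul, smul_eq_mul]
  rw [hsplit]
  have h1 := hlow x
  have h2 : |t * (x ⬝ᵥ E *ᵥ x)| ≤ |t| * (M * (x ⬝ᵥ x)) := by
    rw [abs_mul]
    exact mul_le_mul_of_nonneg_left (quad_abs_le E x) (abs_nonneg t)
  have h3 : |t| * (M + 1) < c := by
    have := mul_lt_mul_of_pos_right ht (show (0:ℝ) < M + 1 by positivity)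
    rwa [div_mul_cancel₀ _ (by positivity : (M:ℝ) + 1 ≠ 0)] at this
  nlinarith [neg_abs_le (t * (x ⬝ᵥ E *ᵥ x)), h2, abs_nonneg t]

lemma hasDerivAt_abs_entry (c e : ℝ) (h : e ≠ 0 → c ≠ 0) :
    HasDerivAt (fun t : ℝ => |c + t * e|) (e * Real.sign c) 0 := by
  rcases eq_or_ne e 0 with rfl | he
  · simpa using hasDerivAt_const (0:ℝ) |c|
  have hc := h he
  have hg : HasDerivAt (fun t : ℝ => c + t * e) e 0 := by
    simpa using ((hasDerivAt_id (0:ℝ)).mul_const e).const_add c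
  have habs := hasDerivAt_abs (show c + 0 * e ≠ 0 by simpa using hc)
  have hcomp := habs.comp 0 hg
  have hsign : (SignType.sign (c + 0 * e) : ℝ) * e = e * Real.sign c := by
    simp only [zero_mul, add_zero]
    rcases lt_trichotomy c 0 with h' | h' | h'
    · rw [Real.sign_of_neg h', sign_neg h']; simp [mul_comm]
    · exact absurd h' hc
    · rw [Real.sign_of_pos h', sign_pos h']; simp [mul_comm]
  rw [hsign] at hcomp
  exact hcomp

lemma hasDerivAt_l1 (Shat E : Matrix (Fin p) (Fin p) ℝ)
    (h : ∀ k l, E k l ≠ 0 → Shat k l ≠ 0) :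
    HasDerivAt (fun t : ℝ => l1Norm (Shat + t • E))
      (∑ k, ∑ l, E k l * Real.sign (Shat k l)) 0 := by
  have hre : ∀ t : ℝ, l1Norm (Shat + t • E) = ∑ k, ∑ l, |Shat k l + t * E k l| := by
    intro t; simp [l1Norm, Matrix.add_apply, Matrix.smul_apply, smul_eq_mul]
  simp only [hre]
  apply HasDerivAt.fun_sum
  intro k _
  apply HasDerivAt.fun_sum
  intro l _
  exact hasDerivAt_abs_entry _ _ (h k l)

lemma hasDerivAt_logdet {A : Matrix (Fin p) (Fin p) ℝ} (E : Matrix (Fin p) (Fin p) ℝ)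
    (hA : A.PosDef) :
    HasDerivAt (fun t : ℝ => Real.log ((A + t • E).det)) ((A⁻¹ * E).trace) 0 := by
  set M : Matrix (Fin p) (Fin p) ℝ := A⁻¹ * E with hM
  set P : Polynomial ℝ := (det (1 + (X : ℝ[X]) • M.map C)).divX.divX with hP
  have hdet0 : A.det ≠ 0 := hA.det_pos.ne'
  have hfac : ∀ t : ℝ, (A + t • E).det = A.det * (1 + M.trace * t + P.eval t * t ^ 2) := by
    intro t
    have : A + t • E = A * (1 + t • M) := by
      rw [Matrix.mul_add, Matrix.mul_one, Matrix.mul_smul, hM, ← Matrix.mul_assoc,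
        mul_nonsing_inv A hdet0.isUnit, Matrix.one_mul]
    rw [this, det_mul, Matrix.det_one_add_smul t M]
  have hg : HasDerivAt (fun t : ℝ => 1 + M.trace * t + P.eval t * t ^ 2) M.trace 0 := by
    have h1 : HasDerivAt (fun t : ℝ => 1 + M.trace * t) M.trace 0 := by
      simpa using ((hasDerivAt_id (0:ℝ)).const_mul M.trace).const_add 1
    have h2 : HasDerivAt (fun t : ℝ => P.eval t * t ^ 2)
        (P.derivative.eval 0 * 0 ^ 2 + P.eval 0 * (↑2 * 0 ^ 1)) 0 :=
      (P.hasDerivAt 0).mul (hasDerivAt_pow 2 0)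
    simpa using h1.fun_add h2
  have hd : HasDerivAt (fun t : ℝ => (A + t • E).det) (A.det * M.trace) 0 := by
    have := hg.const_mul A.det
    refine HasDerivAt.congr_of_eventuallyEq this ?_
    filter_upwards with t
    rw [hfac t]
  have hlog := hd.log (by simpa [hfac 0] using mul_ne_zero hdet0 one_ne_zero)
  have heq : A.det * M.trace / (A + (0:ℝ) • E).det = M.trace := by
    have h0 : (A + (0:ℝ) • E).det = A.det := by simp
    rw [h0]
    field_simp
  rw [heq] at hlog
  exact hlog

lemma hasDerivAt_faObj (μ : ℝ) (Sig Lhat Shat E : Matrix (Fin p) (Fin p) ℝ)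
    (hA : (Lhat + Shat).PosDef) :
    HasDerivAt (fun t : ℝ => faObj μ Sig Lhat (Shat + t • E))
      (μ * ((E * Sig⁻¹).trace - ((Lhat + Shat)⁻¹ * E).trace)) 0 := by
  have hre : ∀ t : ℝ, faObj μ Sig Lhat (Shat + t • E)
      = Lhat.trace + μ * ((((Lhat + Shat) + t • E) * Sig⁻¹).trace
        - Real.log (((Lhat + Shat) + t • E).det)) := by
    intro t; rw [faObj, ← add_assoc]
  simp only [hre]
  have h1 : HasDerivAt (fun t : ℝ => (((Lhat + Shat) + t • E) * Sig⁻¹).trace)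
      ((E * Sig⁻¹).trace) 0 := by
    have he : ∀ t : ℝ, (((Lhat + Shat) + t • E) * Sig⁻¹).trace
        = ((Lhat + Shat) * Sig⁻¹).trace + t * (E * Sig⁻¹).trace := by
      intro t
      rw [Matrix.add_mul, trace_add, Matrix.smul_mul, trace_smul, smul_eq_mul]
    simp only [he]
    simpa using ((hasDerivAt_id (0:ℝ)).mul_const ((E * Sig⁻¹).trace)).const_add ((Lhat + Shat) * Sig⁻¹).trace
  have h2 := hasDerivAt_logdet E hA
  exact ((h1.sub h2).const_mul μ).const_add _

lemma frobNorm_smul (t : ℝ) (E : Matrix (Fin p) (Fin p) ℝ) :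
    frobNorm (t • E) = |t| * frobNorm E := by
  rw [frobNorm, frobNorm]
  have : ∑ i, ∑ j, ((t • E) i j) ^ 2 = t ^ 2 * ∑ i, ∑ j, (E i j) ^ 2 := by
    simp [Matrix.smul_apply, smul_eq_mul, mul_pow, Finset.mul_sum]
  rw [this, Real.sqrt_mul (sq_nonneg t), Real.sqrt_sq_eq_abs]

lemma key_stationarity {p : ℕ}
    (SigHat : Matrix (Fin p) (Fin p) ℝ)
    (μ τ : ℝ)
    (Lhat : Matrix (Fin p) (Fin p) ℝ)
    (Shat : Matrix (Fin p) (Fin p) ℝ) (hShat : Shat.PosDef)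
    (hloc : ∃ ε : ℝ, 0 < ε ∧
      ∀ S : Matrix (Fin p) (Fin p) ℝ, S.PosDef → frobNorm (S - Shat) < ε →
        faObj μ SigHat Lhat Shat + τ * l1Norm Shat ≤
          faObj μ SigHat Lhat S + τ * l1Norm S)
    (hA : (Lhat + Shat).PosDef)
    (E : Matrix (Fin p) (Fin p) ℝ) (hE : E.IsHermitian)
    (hent : ∀ k l, E k l ≠ 0 → Shat k l ≠ 0) :
    μ * ((E * SigHat⁻¹).trace - ((Lhat + Shat)⁻¹ * E).trace)
      + τ * (∑ k, ∑ l, E k l * Real.sign (Shat k l)) = 0 := by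
  obtain ⟨ε, hε, hmin⟩ := hloc
  obtain ⟨δ, hδ, hpd⟩ := posdef_perturb E hShat hE
  set F : ℝ := frobNorm E with hF
  have hF0 : 0 ≤ F := Real.sqrt_nonneg _
  have hlocmin : IsLocalMin
      (fun t : ℝ => faObj μ SigHat Lhat (Shat + t • E) + τ * l1Norm (Shat + t • E)) 0 := by
    rw [IsLocalMin, IsMinFilter, Metric.eventually_nhds_iff]
    refine ⟨min δ (ε / (F + 1)), lt_min hδ (by positivity), fun t ht => ?_⟩
    rw [Real.dist_eq, sub_zero] at ht
    have ht1 : |t| < δ := lt_of_lt_of_le ht (min_le_left _ _)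
    have ht2 : |t| < ε / (F + 1) := lt_of_lt_of_le ht (min_le_right _ _)
    have h1 : (Shat + t • E).PosDef := hpd t ht1
    have h2 : frobNorm ((Shat + t • E) - Shat) < ε := by
      rw [add_sub_cancel_left, frobNorm_smul]
      calc |t| * F ≤ |t| * (F + 1) := by nlinarith [abs_nonneg t]
      _ < (ε / (F + 1)) * (F + 1) := by
          exact mul_lt_mul_of_pos_right ht2 (by positivity)
      _ = ε := by field_simp
    simpa using hmin _ h1 h2
  have hderiv : HasDerivAt
      (fun t : ℝ => faObj μ SigHat Lhat (Shat + t • E) + τ * l1Norm (Shat + t • E))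
      (μ * ((E * SigHat⁻¹).trace - ((Lhat + Shat)⁻¹ * E).trace)
        + τ * (∑ k, ∑ l, E k l * Real.sign (Shat k l))) 0 :=
    (hasDerivAt_faObj μ SigHat Lhat Shat E hA).add
      ((hasDerivAt_l1 Shat E hent).const_mul τ)
  exact hlocmin.hasDerivAt_eq_zero hderiv

lemma trace_std_mul (i j : Fin p) (M : Matrix (Fin p) (Fin p) ℝ) :
    (single i j (1:ℝ) * M).trace = M j i := by
  classical
  rw [Matrix.trace]
  rw [Finset.sum_eq_single i]
  · simp
  · intro k _ hk
    simp [Matrix.diag, single_mul_apply_of_ne, hk]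
  · intro h; exact absurd (Finset.mem_univ i) h

lemma sum_std (i j : Fin p) (f : Fin p → Fin p → ℝ) :
    ∑ k, ∑ l, single i j (1:ℝ) k l * f k l = f i j := by
  classical
  simp [single, Matrix.of_apply, ite_and, Finset.sum_ite_eq]

lemma diag_pos' {S : Matrix (Fin p) (Fin p) ℝ} (hS : S.PosDef) (i : Fin p) : 0 < S i i := by
  have hx : (Pi.single i 1 : Fin p → ℝ) ≠ 0 := by
    intro h
    have := congrFun h i
    simp at this
  have := hS.dotProduct_mulVec_pos hx
  rw [star_trivial] at this
  simpa [dotProduct, mulVec, Pi.single_apply, Finset.sum_ite_eq] using this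

lemma herm_apply {M : Matrix (Fin p) (Fin p) ℝ} (hM : M.IsHermitian) (i j : Fin p) :
    M j i = M i j := by
  simpa using (hM.apply j i).symm

lemma std_herm (i : Fin p) : (single i i (1:ℝ)).IsHermitian := by
  show _ᴴ = _
  ext k l
  simp [single, Matrix.conjTranspose_apply, and_comm]

lemma std_herm₂ (i j : Fin p) :
    (single i j (1:ℝ) + single j i (1:ℝ)).IsHermitian := by
  show _ᴴ = _
  ext k l
  simp only [Matrix.conjTranspose_apply, Matrix.add_apply, star_trivial, single,
    Matrix.of_apply]
  by_cases h1 : i = l <;> by_cases h2 : j = k <;> by_cases h3 : j = l <;> by_cases h4 : i = k <;>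
    simp [h1, h2, h3, h4, and_comm, add_comm]

end Helpers

/-- First-order (stationarity) conditions at a local minimizer of the
ℓ1-regularized objective `S ↦ f(L̂,S) + τ‖S‖₁` over symmetric positive definite
matrices: on the diagonal, `μ Yᵢᵢ = μ Dᵢᵢ + τ`, and at every nonzero
off-diagonal entry, `μ Yᵢⱼ = μ Dᵢⱼ + τ sign(Ŝᵢⱼ)`, where `Y = (L̂+Ŝ)⁻¹` and
`D = Σ̂⁻¹`. -/
theorem l1_local_min_stationarity {p : ℕ}
    (SigHat : Matrix (Fin p) (Fin p) ℝ) (hSig : SigHat.PosDef)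
    (μ τ : ℝ) (hμ : 0 < μ) (hτ : 0 < τ)
    (Lhat : Matrix (Fin p) (Fin p) ℝ) (hLhat : Lhat.PosSemidef)
    (Shat : Matrix (Fin p) (Fin p) ℝ) (hShat : Shat.PosDef)
    (hloc : ∃ ε : ℝ, 0 < ε ∧
      ∀ S : Matrix (Fin p) (Fin p) ℝ, S.PosDef → frobNorm (S - Shat) < ε →
        faObj μ SigHat Lhat Shat + τ * l1Norm Shat ≤
          faObj μ SigHat Lhat S + τ * l1Norm S) :
    (∀ i : Fin p, μ * (Lhat + Shat)⁻¹ i i = μ * SigHat⁻¹ i i + τ) ∧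
    (∀ i j : Fin p, i ≠ j → Shat i j ≠ 0 →
      μ * (Lhat + Shat)⁻¹ i j = μ * SigHat⁻¹ i j + τ * Real.sign (Shat i j)) := by
  have hA : (Lhat + Shat).PosDef := Matrix.PosDef.posSemidef_add hLhat hShat
  have hAinvH : ((Lhat + Shat)⁻¹).IsHermitian := hA.inv.isHermitian
  have hSinvH : (SigHat⁻¹).IsHermitian := hSig.inv.isHermitian
  constructor
  · intro i
    set E := single i i (1:ℝ) with hEdef
    have hent : ∀ k l, E k l ≠ 0 → Shat k l ≠ 0 := by
      intro k l hkl
      have : i = k ∧ i = l := by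
        by_contra hc
        apply hkl
        simp [hEdef, single, Matrix.of_apply, hc]
      obtain ⟨rfl, rfl⟩ := this
      exact (diag_pos' hShat i).ne'
    have hkey := key_stationarity SigHat μ τ Lhat Shat hShat hloc hA E (std_herm i) hent
    rw [hEdef] at hkey
    rw [trace_mul_comm ((Lhat + Shat)⁻¹) _, trace_std_mul, trace_std_mul, sum_std] at hkey
    have hsgn : Real.sign (Shat i i) = 1 := Real.sign_of_pos (diag_pos' hShat i)
    rw [hsgn] at hkey
    linarith
  · intro i j hij hSij
    set E := single i j (1:ℝ) + single j i (1:ℝ) with hEdef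
    have hShatji : Shat j i = Shat i j := herm_apply hShat.isHermitian i j
    have hent : ∀ k l, E k l ≠ 0 → Shat k l ≠ 0 := by
      intro k l hkl
      have : (i = k ∧ j = l) ∨ (j = k ∧ i = l) := by
        by_contra hc
        push_neg at hc
        apply hkl
        simp only [hEdef, Matrix.add_apply, single, Matrix.of_apply]
        rw [if_neg, if_neg]
        · ring
        · intro h; exact (hc.2 h.1) h.2
        · intro h; exact (hc.1 h.1) h.2
      rcases this with ⟨rfl, rfl⟩ | ⟨rfl, rfl⟩
      · exact hSij
      · rw [hShatji]; exact hSij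
    have hkey := key_stationarity SigHat μ τ Lhat Shat hShat hloc hA E (std_herm₂ i j) hent
    rw [hEdef] at hkey
    rw [trace_mul_comm ((Lhat + Shat)⁻¹) _, Matrix.add_mul, Matrix.add_mul,
      trace_add, trace_add, trace_std_mul, trace_std_mul, trace_std_mul, trace_std_mul] at hkey
    have hsum : (∑ k, ∑ l, (single i j (1:ℝ) + single j i (1:ℝ)) k l
        * Real.sign (Shat k l)) = 2 * Real.sign (Shat i j) := by
      have : ∀ k l, ((single i j (1:ℝ) + single j i (1:ℝ)) k l
          * Real.sign (Shat k l))
          = single i j (1:ℝ) k l * Real.sign (Shat k l)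
            + single j i (1:ℝ) k l * Real.sign (Shat k l) := by
        intro k l; rw [Matrix.add_apply, add_mul]
      simp only [this, Finset.sum_add_distrib]
      rw [sum_std, sum_std, hShatji]
      ring
    rw [hsum] at hkey
    have hSji : SigHat⁻¹ j i = SigHat⁻¹ i j := herm_apply hSinvH i j
    have hAji : (Lhat + Shat)⁻¹ j i = (Lhat + Shat)⁻¹ i j := herm_apply hAinvH i j
    rw [hSji, hAji] at hkey
    linarith
end
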